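/- For any finite non-solvable group G, the solvable graph Γ_s(G) has no isolated vertex: every u ∈ G \ Sol(G) is adjacent in Γ_s(G) to some vertex distinct from u. -/

import Mathlib

open Subgroup

section Core

variable {G : Type*} [Group G]

/-- If `b` normalizes `zpowers a`, then `⟨a, b⟩` is solvable. -/
lemma solvable_closure_of_mem_normalizer (a b : G)
    (h : b ∈ Subgroup.normalizer (Subgroup.zpowers a : Set G)) :
    IsSolvable (Subgroup.closure ({a, b} : Set G)) := by
  set N := Subgroup.zpowers a with hN
  set K := N ⊔ Subgroup.zpowers b with hK
  have hKclos : Subgroup.closure ({a, b} : Set G) = K := by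
    rw [hK, hN, Set.insert_eq, Subgroup.closure_union, ← zpowers_eq_closure,
      ← zpowers_eq_closure]
  have hNK : N ≤ K := le_sup_left
  have hKnorm : K ≤ Subgroup.normalizer (N : Set G) := sup_le N.le_normalizer (zpowers_le.mpr h)
  have hnormal : (N.subgroupOf K).Normal := by
    rw [normal_subgroupOf_iff hNK]
    intro x k hx hk
    exact ((Subgroup.mem_normalizer_iff.mp (hKnorm hk)) x).mp hx
  have hNsolv : IsSolvable (N.subgroupOf K) := by
    have hcomm : IsSolvable N := by
      apply isSolvable_of_comm
      rintro ⟨x, hx⟩ ⟨y, hy⟩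
      obtain ⟨m, rfl⟩ := hx
      obtain ⟨n, rfl⟩ := hy
      exact Subtype.ext (Commute.zpow_zpow_self a m n)
    exact @solvable_of_solvable_injective _ _ _ _
      ((Subgroup.subgroupOfEquivOfLe hNK).toMonoidHom)
      (Subgroup.subgroupOfEquivOfLe hNK).injective hcomm
  have hbK : b ∈ K := by
    have : Subgroup.zpowers b ≤ K := le_sup_right
    exact this (Subgroup.mem_zpowers b)
  set Q := K ⧸ N.subgroupOf K with hQ
  set bq : Q := QuotientGroup.mk' (N.subgroupOf K) ⟨b, hbK⟩ with hbq
  have hgen : ∀ q : Q, q ∈ Subgroup.zpowers bq := by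
    intro q
    obtain ⟨k, rfl⟩ := QuotientGroup.mk'_surjective (N.subgroupOf K) q
    set P := Subgroup.comap (QuotientGroup.mk' (N.subgroupOf K)) (Subgroup.zpowers bq) with hP
    have haP : a ∈ P.map K.subtype := by
      refine ⟨⟨a, hNK (Subgroup.mem_zpowers a)⟩, ?_, rfl⟩
      refine Subgroup.mem_comap.mpr ?_
      have h1 : QuotientGroup.mk' (N.subgroupOf K) ⟨a, hNK (Subgroup.mem_zpowers a)⟩ = 1 := by
        rw [QuotientGroup.mk'_apply, QuotientGroup.eq_one_iff]
        exact Subgroup.mem_subgroupOf.mpr (Subgroup.mem_zpowers a)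
      rw [h1]
      exact Subgroup.one_mem _
    have hbP : b ∈ P.map K.subtype := ⟨⟨b, hbK⟩, Subgroup.mem_zpowers bq, rfl⟩
    have hle : Subgroup.closure ({a, b} : Set G) ≤ P.map K.subtype := by
      rw [Subgroup.closure_le]
      rintro x (rfl | rfl)
      · exact haP
      · exact hbP
    have hk2 : (k : G) ∈ Subgroup.closure ({a, b} : Set G) := by rw [hKclos]; exact k.2
    obtain ⟨p, hp, hpk⟩ := hle hk2
    have hpk' : p = k := Subtype.ext hpk
    rw [← hpk']
    exact hp
  have hQsolv : IsSolvable Q := by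
    apply isSolvable_of_comm
    intro x y
    obtain ⟨m, rfl⟩ := hgen x
    obtain ⟨n, rfl⟩ := hgen y
    exact Commute.zpow_zpow_self bq m n
  have hKsolv : IsSolvable K :=
    solvable_of_ker_le_range (N.subgroupOf K).subtype (QuotientGroup.mk' (N.subgroupOf K))
      (by rw [QuotientGroup.ker_mk', Subgroup.range_subtype]) (hG' := hNsolv) (hG'' := hQsolv)
  rw [hKclos]
  exact hKsolv

end Core

section Aux

variable {G : Type*} [Group G]

lemma mem_normalizer_zpowers_of_conj {a b : G}
    (h : b * a * b⁻¹ ∈ Subgroup.zpowers a) (h' : b⁻¹ * a * b ∈ Subgroup.zpowers a) :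
    b ∈ Subgroup.normalizer (Subgroup.zpowers a : Set G) := by
  rw [Subgroup.mem_normalizer_iff]
  intro x
  constructor
  · rintro ⟨k, rfl⟩
    rw [← conj_zpow]
    exact Subgroup.zpow_mem _ h k
  · rintro ⟨k, hk⟩
    have : x = (b⁻¹ * a * b) ^ k := by
      have hk' : a ^ k = b * x * b⁻¹ := hk
      rw [show b⁻¹ * a * b = b⁻¹ * a * (b⁻¹)⁻¹ by rw [inv_inv], conj_zpow, hk']
      group
    rw [this]
    exact Subgroup.zpow_mem _ h' k



lemma closure_pair_conj_solvable_iff (g u x : G) :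
    IsSolvable (Subgroup.closure ({g * u * g⁻¹, g * x * g⁻¹} : Set G)) ↔
      IsSolvable (Subgroup.closure ({u, x} : Set G)) := by
  set e : G ≃* G := MulAut.conj g with he
  have hmap : Subgroup.map (e : G →* G) (Subgroup.closure {u, x}) =
      Subgroup.closure ({g * u * g⁻¹, g * x * g⁻¹} : Set G) := by
    rw [MonoidHom.map_closure, Set.image_pair]
    rfl
  have equiv := (MulEquiv.subgroupMap e (Subgroup.closure {u, x}))
  rw [← hmap]
  constructor
  · intro hs
    haveI := hs
    exact @solvable_of_solvable_injective _ _ _ _ equiv.toMonoidHom equiv.injective hs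
  · intro hs
    haveI := hs
    exact @solvable_of_solvable_injective _ _ _ _ equiv.symm.toMonoidHom equiv.symm.injective hs


lemma conj_notMem_solRadical' {u : G} (hu : ¬ ∀ v : G, IsSolvable (Subgroup.closure ({u, v} : Set G)))
    (g : G) : ¬ ∀ v : G, IsSolvable (Subgroup.closure ({g * u * g⁻¹, v} : Set G)) := by
  intro hw
  apply hu
  intro x
  have := hw (g * x * g⁻¹)
  exact (closure_pair_conj_solvable_iff g u x).mp this

lemma closure_pair_inv (u x : G) :
    Subgroup.closure ({u⁻¹, x} : Set G) = Subgroup.closure ({u, x} : Set G) := by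
  apply le_antisymm
  · rw [Subgroup.closure_le, Set.insert_subset_iff, Set.singleton_subset_iff]
    exact ⟨inv_mem (Subgroup.subset_closure (Set.mem_insert _ _)),
      Subgroup.subset_closure (Set.mem_insert_of_mem _ rfl)⟩
  · rw [Subgroup.closure_le, Set.insert_subset_iff, Set.singleton_subset_iff]
    refine ⟨?_, Subgroup.subset_closure (Set.mem_insert_of_mem _ rfl)⟩
    have h1 : u⁻¹ ∈ Subgroup.closure ({u⁻¹, x} : Set G) :=
      Subgroup.subset_closure (Set.mem_insert _ _)
    simpa using inv_mem h1

end Aux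


/-- The solvabilizer of `u` in `G`: the set of `v` such that `⟨u, v⟩` is solvable. -/
def solvabilizer (G : Type*) [Group G] (u : G) : Set G :=
  {v | IsSolvable (Subgroup.closure {u, v})}

/-- The solvable radical `Sol(G)`: elements `u` with `⟨u, v⟩` solvable for all `v`. -/
def solRadical (G : Type*) [Group G] : Set G :=
  {u | ∀ v : G, IsSolvable (Subgroup.closure {u, v})}

/-- The solvable graph of `G`: vertex set `G \ Sol(G)`, two distinct vertices `u`, `v`
adjacent iff `⟨u, v⟩` is solvable. -/
def solvableGraph (G : Type*) [Group G] : SimpleGraph {u : G // u ∉ solRadical G} where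
  Adj u v := u ≠ v ∧ IsSolvable (Subgroup.closure {(u : G), (v : G)})
  symm := by
    constructor
    rintro u v ⟨hne, hs⟩
    exact ⟨hne.symm, by rwa [Set.pair_comm]⟩
  loopless := by constructor; rintro u ⟨hne, _⟩; exact hne rfl

/-- The solvable graph of a finite non-solvable group has no isolated vertex. -/
theorem solvableGraph_no_isolated_vertex {G : Type*} [Group G] [Fintype G]
    (hG : ¬ IsSolvable G) (u : {x : G // x ∉ solRadical G}) :
    ∃ v : {x : G // x ∉ solRadical G}, (solvableGraph G).Adj u v := by
  obtain ⟨a, ha⟩ := u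
  have ha' : ¬ ∀ v : G, IsSolvable (Subgroup.closure ({a, v} : Set G)) := ha
  by_cases hsq : a * a = 1
  · -- `a` is an involution; it cannot be central
    have hainv : a⁻¹ = a := by
      rw [inv_eq_iff_mul_eq_one]; exact hsq
    by_cases hc : ∀ g : G, g * a * g⁻¹ = a
    · exfalso
      apply ha
      intro v
      apply solvable_closure_of_mem_normalizer
      refine mem_normalizer_zpowers_of_conj ?_ ?_
      · rw [hc v]; exact Subgroup.mem_zpowers a
      · rw [show v⁻¹ * a * v = v⁻¹ * a * (v⁻¹)⁻¹ by rw [inv_inv], hc v⁻¹]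
        exact Subgroup.mem_zpowers a
    · push_neg at hc
      obtain ⟨g, hg⟩ := hc
      set w := g * a * g⁻¹ with hw
      have hwinv : w⁻¹ = w := by
        rw [hw, show (g * a * g⁻¹)⁻¹ = g * a⁻¹ * g⁻¹ by group, hainv]
      have hwrad : w ∉ solRadical G := conj_notMem_solRadical' ha' g
      refine ⟨⟨w, hwrad⟩, ?_, ?_⟩
      · intro hcontra
        exact hg (congrArg Subtype.val hcontra).symm
      · -- ⟨a, w⟩ is dihedral-like, hence solvable
        have hkey : a * (a * w) * a⁻¹ ∈ Subgroup.zpowers (a * w) := by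
          refine ⟨-1, ?_⟩
          show (a * w) ^ (-1 : ℤ) = a * (a * w) * a⁻¹
          rw [zpow_neg_one, mul_inv_rev, hwinv, hainv,
            show a * (a * w) * a = (a * a) * (w * a) by group, hsq, one_mul]
        have hkey' : a⁻¹ * (a * w) * a ∈ Subgroup.zpowers (a * w) := by
          rw [hainv] at hkey ⊢
          exact hkey
        have hsolv : IsSolvable (Subgroup.closure ({a * w, a} : Set G)) :=
          solvable_closure_of_mem_normalizer (a * w) a
            (mem_normalizer_zpowers_of_conj hkey hkey')
        have hcl : Subgroup.closure ({a, w} : Set G) = Subgroup.closure ({a * w, a} : Set G) := by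
          apply le_antisymm
          · rw [Subgroup.closure_le, Set.insert_subset_iff, Set.singleton_subset_iff]
            constructor
            · exact Subgroup.subset_closure (Set.mem_insert_of_mem _ rfl)
            · have h1 : a ∈ Subgroup.closure ({a * w, a} : Set G) :=
                Subgroup.subset_closure (Set.mem_insert_of_mem _ rfl)
              have h2 : a * w ∈ Subgroup.closure ({a * w, a} : Set G) :=
                Subgroup.subset_closure (Set.mem_insert _ _)
              have := mul_mem (inv_mem h1) h2
              rwa [show a⁻¹ * (a * w) = w by group] at this
          · rw [Subgroup.closure_le, Set.insert_subset_iff, Set.singleton_subset_iff]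
            constructor
            · exact mul_mem (Subgroup.subset_closure (Set.mem_insert _ _))
                (Subgroup.subset_closure (Set.mem_insert_of_mem _ rfl))
            · exact Subgroup.subset_closure (Set.mem_insert _ _)
        rw [show ((⟨a, ha⟩ : {x : G // x ∉ solRadical G}) : G) = a from rfl]
        rw [show ((⟨w, hwrad⟩ : {x : G // x ∉ solRadical G}) : G) = w from rfl]
        rw [hcl]
        exact hsolv
  · -- `a` is not an involution: take `v = a⁻¹`
    have hne : a⁻¹ ≠ a := fun h => hsq (by nth_rewrite 2 [← h]; simp)
    have hrad : a⁻¹ ∉ solRadical G := by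
      intro hmem
      apply ha
      intro v
      have := hmem v
      rwa [closure_pair_inv] at this
    refine ⟨⟨a⁻¹, hrad⟩, ?_, ?_⟩
    · intro hcontra
      exact hne (congrArg Subtype.val hcontra).symm
    · apply solvable_closure_of_mem_normalizer
      refine mem_normalizer_zpowers_of_conj ?_ ?_
      · rw [show a⁻¹ * a * (a⁻¹)⁻¹ = a by group]
        exact Subgroup.mem_zpowers _
      · rw [show (a⁻¹)⁻¹ * a * a⁻¹ = a by group]
        exact Subgroup.mem_zpowers _
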